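/- For all n ≥ 1, the number of nonnesting permutations of the multiset {1,1,2,2,…,n,n} that avoid all six patterns 1231, 1321, 2132, 2312, 3123, and 3213 equals n!·F_n, where F_n is the nth Fibonacci number. -/

import Mathlib

/-- `w` is a permutation of the multiset `{1,1,2,2,…,n,n}`:
a word in which every value in `{1,…,n}` occurs exactly twice
and no other value occurs. -/
def IsMultisetPerm (n : ℕ) (w : List ℕ) : Prop :=
  ∀ i : ℕ, w.count i = if 1 ≤ i ∧ i ≤ n then 2 else 0

/-- `t` is order-isomorphic to the word `σ`:
same length, and entries compare (both `<` and `=`) in the same way. -/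
def OrderIsoWord (t σ : List ℕ) : Prop :=
  t.length = σ.length ∧
  ∀ r s : ℕ, r < σ.length → s < σ.length →
    ((t.getD r 0 < t.getD s 0 ↔ σ.getD r 0 < σ.getD s 0) ∧
     (t.getD r 0 = t.getD s 0 ↔ σ.getD r 0 = σ.getD s 0))

/-- `w` contains the pattern `σ`: some subsequence of `w`
is order-isomorphic to `σ`. -/
def Contains (w σ : List ℕ) : Prop :=
  ∃ t : List ℕ, t.Sublist w ∧ OrderIsoWord t σ

/-- `w` avoids the pattern `σ`. -/
def Avoids (w σ : List ℕ) : Prop := ¬ Contains w σ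

/-- `w` is a nonnesting permutation of `{1,1,2,2,…,n,n}`:
it avoids the patterns `1221` and `2112`. -/
def IsNonnesting (n : ℕ) (w : List ℕ) : Prop :=
  IsMultisetPerm n w ∧ Avoids w [1,2,2,1] ∧ Avoids w [2,1,1,2]


def MP (S : Finset ℕ) (w : List ℕ) : Prop := ∀ i : ℕ, w.count i = if i ∈ S then 2 else 0

def Good (w : List ℕ) : Prop := ∀ x y z : ℕ, ¬ [x,y,z,x].Sublist w

def blockF : ℕ → Finset ℕ → Finset (List ℕ)
  | 0, _ => {[]}
  | 1, S => S.image (fun a => [a,a])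
  | (n+2), S =>
      S.biUnion (fun a => (blockF (n+1) (S.erase a)).image (fun w => a::a::w)) ∪
      S.biUnion (fun a => (S.erase a).biUnion (fun b =>
        (blockF n ((S.erase a).erase b)).image (fun w => a::b::a::b::w)))

lemma MP_empty {w : List ℕ} (h : MP ∅ w) : w = [] := by
  cases w with
  | nil => rfl
  | cons a t => have := h a; simp [List.count_cons] at this

lemma MP_nil {S : Finset ℕ} (h : MP S []) : S = ∅ := by
  ext i
  have := h i
  simp only [List.count_nil] at this
  simp only [Finset.notMem_empty, iff_false]
  intro hi
  simp [hi] at this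

lemma Good_sub {w v : List ℕ} (h : v.Sublist w) (hg : Good w) : Good v :=
  fun x y z hx => hg x y z (hx.trans h)

lemma MP_cons2 {S : Finset ℕ} {a : ℕ} {w : List ℕ} (ha : a ∈ S)
    (hw : MP (S.erase a) w) : MP S (a::a::w) := by
  intro i
  have := hw i
  by_cases hia : i = a
  · subst hia
    simp [List.count_cons, ha, Finset.mem_erase] at this ⊢
    omega
  · simp [List.count_cons, hia, Finset.mem_erase] at this ⊢
    simpa [hia, Ne.symm hia] using this

lemma MP_cons2' {S : Finset ℕ} {a : ℕ} {w : List ℕ} (h : MP S (a::a::w)) :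
    a ∈ S ∧ MP (S.erase a) w := by
  have ha := h a
  simp [List.count_cons] at ha
  by_cases haS : a ∈ S
  · refine ⟨haS, fun i => ?_⟩
    have := h i
    by_cases hia : i = a
    · subst hia; simp [haS, Finset.mem_erase] at this ⊢; omega
    · simp [List.count_cons, hia, Finset.mem_erase] at this ⊢; simpa [hia, Ne.symm hia] using this
  · simp [haS] at ha

lemma MP_cons4 {S : Finset ℕ} {a b : ℕ} {w : List ℕ} (ha : a ∈ S) (hb : b ∈ S) (hab : a ≠ b)
    (hw : MP ((S.erase a).erase b) w) : MP S (a::b::a::b::w) := by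
  intro i
  have := hw i
  by_cases hia : i = a
  · subst hia
    simp [List.count_cons, hab, ha, Finset.mem_erase, Ne.symm hab] at this ⊢
    omega
  · by_cases hib : i = b
    · subst hib
      simp [List.count_cons, Ne.symm hab, hb, Finset.mem_erase, hab] at this ⊢
      omega
    · simp [List.count_cons, hia, hib, Finset.mem_erase] at this ⊢
      simpa [hia, hib, Ne.symm hia, Ne.symm hib] using this

lemma MP_cons4' {S : Finset ℕ} {a b : ℕ} {w : List ℕ} (h : MP S (a::b::a::b::w)) :
    a ∈ S ∧ b ∈ S ∧ a ≠ b ∧ MP ((S.erase a).erase b) w := by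
  have ha := h a
  have hb := h b
  have hab : a ≠ b := by
    intro hEq; subst hEq
    simp [List.count_cons] at ha
    by_cases h' : a ∈ S <;> simp [h'] at ha <;> omega
  simp [List.count_cons, hab, Ne.symm hab] at ha hb
  have haS : a ∈ S := by by_cases h' : a ∈ S; exact h'; simp [h'] at ha
  have hbS : b ∈ S := by by_cases h' : b ∈ S; exact h'; simp [h'] at hb
  refine ⟨haS, hbS, hab, fun i => ?_⟩
  have := h i
  by_cases hia : i = a
  · subst hia; simp [haS, Finset.mem_erase, List.count_cons, hab] at this ⊢; omega
  · by_cases hib : i = b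
    · subst hib; simp [hbS, Finset.mem_erase, List.count_cons, Ne.symm hab, hab] at this ⊢; omega
    · simp [List.count_cons, hia, hib, Finset.mem_erase] at this ⊢
      simpa [hia, hib, Ne.symm hia, Ne.symm hib] using this

lemma Good_cons2 {a : ℕ} {w : List ℕ} (haw : a ∉ w) (hg : Good w) : Good (a::a::w) := by
  intro x y z h
  repeat'
    first
    | exact hg x y z h
    | (refine absurd (h.subset ?_) haw; simp; done)
    | exact absurd rfl (by assumption)
    | (rcases List.sublist_cons_iff.1 h with h | ⟨r, hr, h⟩ <;>
       try (simp only [List.cons.injEq] at hr; obtain ⟨rfl, rfl⟩ := hr))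

lemma Good_cons4 {a b : ℕ} {w : List ℕ} (haw : a ∉ w) (hbw : b ∉ w) (hab : a ≠ b)
    (hg : Good w) : Good (a::b::a::b::w) := by
  intro x y z h
  repeat'
    first
    | exact hg x y z h
    | (refine absurd (h.subset ?_) haw; simp; done)
    | (refine absurd (h.subset ?_) hbw; simp; done)
    | exact absurd rfl hab
    | (rcases List.sublist_cons_iff.1 h with h | ⟨r, hr, h⟩ <;>
       try (simp only [List.cons.injEq] at hr; obtain ⟨rfl, rfl⟩ := hr))

lemma MP_count_of_mem {S : Finset ℕ} {w : List ℕ} (h : MP S w) {i : ℕ} (hi : i ∈ w) :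
    w.count i = 2 := by
  have h1 := h i
  have h2 : 0 < w.count i := List.count_pos_iff.2 hi
  split at h1
  · exact h1
  · omega

lemma first_occ {a : ℕ} {l : List ℕ} (h : a ∈ l) : ∃ m r, l = m ++ a :: r ∧ a ∉ m := by
  induction l with
  | nil => cases h
  | cons b t ih =>
    by_cases hba : b = a
    · exact ⟨[], t, by simp [hba], by simp⟩
    · obtain ⟨m, r, rfl, hm⟩ := ih ((List.mem_cons.1 h).resolve_left (fun e => hba e.symm))
      exact ⟨b::m, r, by simp, by simp only [List.mem_cons]; push_neg; exact ⟨fun e => hba e.symm, hm⟩⟩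

lemma exists_decomp {S : Finset ℕ} {w : List ℕ} (hMP : MP S w) (hg : Good w) (hne : w ≠ []) :
    (∃ a w', w = a::a::w') ∨ (∃ a b w', a ≠ b ∧ w = a::b::a::b::w') := by
  obtain ⟨a, w₁, rfl⟩ : ∃ a w₁, w = a :: w₁ := by
    cases w with
    | nil => exact absurd rfl hne
    | cons a t => exact ⟨a, t, rfl⟩
  have hca : (a :: w₁).count a = 2 := MP_count_of_mem hMP (by simp)
  have haw₁ : a ∈ w₁ := by
    rw [← List.count_pos_iff]
    simp [List.count_cons] at hca; omega
  obtain ⟨m, r, rfl, hm⟩ := first_occ haw₁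
  match m, hm with
  | [], _ => exact Or.inl ⟨a, r, rfl⟩
  | [b], hm =>
    have hab : a ≠ b := by simpa using hm
    have hcb : (a :: ([b] ++ a :: r)).count b = 2 := MP_count_of_mem hMP (by simp)
    have hbr : b ∈ r := by
      rw [← List.count_pos_iff]
      simp [List.count_cons, hab, Ne.symm hab] at hcb; omega
    obtain ⟨m', r', rfl, hm'⟩ := first_occ hbr
    match m', hm' with
    | [], _ => exact Or.inr ⟨a, b, r', hab, rfl⟩
    | c::m'', hm' =>
      exfalso
      refine hg b a c ?_
      have h1 : List.Sublist [b] (m'' ++ b :: r') := List.singleton_sublist.2 (by simp)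
      have h4 : List.Sublist [b,a,c,b] (b :: a :: c :: (m'' ++ b :: r')) :=
        List.Sublist.cons₂ b (List.Sublist.cons₂ a (List.Sublist.cons₂ c h1))
      simpa using h4.cons a
  | b::c::m₃, hm =>
    exfalso
    refine hg a b c ?_
    have h1 : List.Sublist [a] (m₃ ++ a :: r) := List.singleton_sublist.2 (by simp)
    have h4 : List.Sublist [a,b,c,a] (a :: b :: c :: (m₃ ++ a :: r)) :=
      List.Sublist.cons₂ a (List.Sublist.cons₂ b (List.Sublist.cons₂ c h1))
    simpa using h4
theorem mem_blockF : ∀ (n : ℕ) (S : Finset ℕ), S.card = n → ∀ w : List ℕ,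
    (w ∈ blockF n S ↔ MP S w ∧ Good w)
  | 0, S, hS, w => by
    have hSe : S = ∅ := Finset.card_eq_zero.1 hS
    subst hSe
    simp only [blockF, Finset.mem_singleton]
    constructor
    · rintro rfl
      exact ⟨fun i => by simp, fun x y z h => by simpa using h.length_le⟩
    · rintro ⟨h1, _⟩; exact MP_empty h1
  | 1, S, hS, w => by
    obtain ⟨a, rfl⟩ := Finset.card_eq_one.1 hS
    simp only [blockF, Finset.mem_image, Finset.mem_singleton]
    constructor
    · rintro ⟨b, rfl, rfl⟩
      refine ⟨fun i => by by_cases hib : i = b <;> simp [List.count_cons, hib] <;> omega, ?_⟩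
      intro x y z h
      simpa using h.length_le
    · rintro ⟨h1, h2⟩
      have hne : w ≠ [] := by
        rintro rfl
        simpa using MP_nil h1
      rcases exists_decomp h1 h2 hne with ⟨c, w', rfl⟩ | ⟨c, d, w', hcd, rfl⟩
      · obtain ⟨hc, h1'⟩ := MP_cons2' h1
        have : ({a} : Finset ℕ).erase c = ∅ := by
          simp at hc; subst hc; simp
        rw [this] at h1'
        have := MP_empty h1'
        subst this
        exact ⟨c, by simpa using hc, rfl⟩
      · obtain ⟨hc, hd, hcd', _⟩ := MP_cons4' h1
        simp at hc hd
        exact absurd (hc.trans hd.symm) hcd'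
  | (n+2), S, hS, w => by
    constructor
    · intro hw
      rw [blockF, Finset.mem_union] at hw
      rcases hw with hw | hw
      · rw [Finset.mem_biUnion] at hw
        obtain ⟨a, ha, hw⟩ := hw
        rw [Finset.mem_image] at hw
        obtain ⟨v, hv, rfl⟩ := hw
        have hcard : (S.erase a).card = n + 1 := by
          rw [Finset.card_erase_of_mem ha, hS]; omega
        obtain ⟨hMP, hG⟩ := (mem_blockF (n+1) (S.erase a) hcard v).1 hv
        refine ⟨MP_cons2 ha hMP, ?_⟩
        have hav : a ∉ v := by
          rw [← List.count_eq_zero]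
          rw [hMP a]
          simp
        exact Good_cons2 hav hG
      · rw [Finset.mem_biUnion] at hw
        obtain ⟨a, ha, hw⟩ := hw
        rw [Finset.mem_biUnion] at hw
        obtain ⟨b, hb, hw⟩ := hw
        rw [Finset.mem_image] at hw
        obtain ⟨v, hv, rfl⟩ := hw
        rw [Finset.mem_erase] at hb
        have hcard : ((S.erase a).erase b).card = n := by
          rw [Finset.card_erase_of_mem (Finset.mem_erase.2 hb),
            Finset.card_erase_of_mem ha, hS]; omega
        obtain ⟨hMP, hG⟩ := (mem_blockF n _ hcard v).1 hv
        have hav : a ∉ v := by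
          rw [← List.count_eq_zero, hMP a]
          simp
        have hbv : b ∉ v := by
          rw [← List.count_eq_zero, hMP b]
          simp [Finset.mem_erase]
        refine ⟨MP_cons4 ha hb.2 (Ne.symm hb.1) hMP, Good_cons4 hav hbv (Ne.symm hb.1) hG⟩
    · rintro ⟨h1, h2⟩
      have hne : w ≠ [] := by
        rintro rfl
        have := MP_nil h1
        subst this
        simp at hS
      rw [blockF, Finset.mem_union]
      rcases exists_decomp h1 h2 hne with ⟨a, w', rfl⟩ | ⟨a, b, w', hab, rfl⟩
      · obtain ⟨ha, h1'⟩ := MP_cons2' h1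
        have hcard : (S.erase a).card = n + 1 := by
          rw [Finset.card_erase_of_mem ha, hS]; omega
        have hG' : Good w' := Good_sub ((List.sublist_cons_self a w').trans
          (List.sublist_cons_self a (a::w'))) h2
        have hv := (mem_blockF (n+1) (S.erase a) hcard w').2 ⟨h1', hG'⟩
        left
        rw [Finset.mem_biUnion]
        exact ⟨a, ha, Finset.mem_image.2 ⟨w', hv, rfl⟩⟩
      · obtain ⟨ha, hb, hab', h1'⟩ := MP_cons4' h1
        have hcard : ((S.erase a).erase b).card = n := by
          rw [Finset.card_erase_of_mem (Finset.mem_erase.2 ⟨Ne.symm hab', hb⟩),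
            Finset.card_erase_of_mem ha, hS]; omega
        have hG' : Good w' := Good_sub (by
          have : List.Sublist w' (b::w') := List.sublist_cons_self _ _
          exact (((this.trans (List.sublist_cons_self _ _)).trans
            (List.sublist_cons_self _ _)).trans (List.sublist_cons_self _ _))) h2
        have hv := (mem_blockF n _ hcard w').2 ⟨h1', hG'⟩
        right
        rw [Finset.mem_biUnion]
        refine ⟨a, ha, ?_⟩
        rw [Finset.mem_biUnion]
        refine ⟨b, Finset.mem_erase.2 ⟨Ne.symm hab', hb⟩, Finset.mem_image.2 ⟨w', hv, rfl⟩⟩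
theorem card_blockF : ∀ (n : ℕ) (S : Finset ℕ), S.card = n →
    (blockF n S).card = n.factorial * Nat.fib (n+1)
  | 0, S, hS => by simp [blockF]
  | 1, S, hS => by
    rw [blockF, Finset.card_image_of_injective _ (fun u v h => by simpa using h), hS]
    simp
  | (n+2), S, hS => by
    rw [blockF]
    have hd12 : Disjoint
        (S.biUnion (fun a => (blockF (n+1) (S.erase a)).image (fun w => a::a::w)))
        (S.biUnion (fun a => (S.erase a).biUnion (fun b =>
          (blockF n ((S.erase a).erase b)).image (fun w => a::b::a::b::w)))) := by
      rw [Finset.disjoint_left]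
      intro w hw1 hw2
      simp only [Finset.mem_biUnion, Finset.mem_image] at hw1 hw2
      obtain ⟨a, ha, v, hv, rfl⟩ := hw1
      obtain ⟨a', ha', b', hb', v', hv', heq⟩ := hw2
      rw [Finset.mem_erase] at hb'
      simp only [List.cons.injEq] at heq
      exact hb'.1 (heq.2.1.trans heq.1.symm)
    have hterm1 : ∀ a ∈ S, ((blockF (n+1) (S.erase a)).image
        (fun w => a::a::w)).card = (n+1).factorial * Nat.fib (n+2) := by
      intro a ha
      rw [Finset.card_image_of_injective _ (fun u v h => by simpa using h)]
      refine card_blockF (n+1) _ ?_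
      rw [Finset.card_erase_of_mem ha, hS]
      omega
    have hterm2 : ∀ a ∈ S, ∀ b ∈ S.erase a, ((blockF n ((S.erase a).erase b)).image
        (fun w => a::b::a::b::w)).card = n.factorial * Nat.fib (n+1) := by
      intro a ha b hb
      rw [Finset.card_image_of_injective _ (fun u v h => by simpa using h)]
      refine card_blockF n _ ?_
      rw [Finset.mem_erase] at hb
      rw [Finset.card_erase_of_mem (Finset.mem_erase.2 hb),
        Finset.card_erase_of_mem ha, hS]
      omega
    have hc1 : (S.biUnion (fun a => (blockF (n+1) (S.erase a)).image
        (fun w => a::a::w))).card = (n+2) * ((n+1).factorial * Nat.fib (n+2)) := by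
      rw [Finset.card_biUnion, Finset.sum_congr rfl hterm1, Finset.sum_const, hS,
        smul_eq_mul]
      intro a ha b hb hab
      rw [Function.onFun, Finset.disjoint_left]
      intro w hw1 hw2
      simp only [Finset.mem_image] at hw1 hw2
      obtain ⟨v, _, rfl⟩ := hw1
      obtain ⟨v', _, heq⟩ := hw2
      simp only [List.cons.injEq] at heq
      exact hab heq.1.symm
    have hinner : ∀ a ∈ S, ((S.erase a).biUnion (fun b =>
        (blockF n ((S.erase a).erase b)).image (fun w => a::b::a::b::w))).card =
        (n+1) * (n.factorial * Nat.fib (n+1)) := by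
      intro a ha
      have hSe : (S.erase a).card = n + 1 := by
        rw [Finset.card_erase_of_mem ha, hS]
        omega
      rw [Finset.card_biUnion, Finset.sum_congr rfl (hterm2 a ha), Finset.sum_const,
        hSe, smul_eq_mul]
      intro b hb c hc hbc
      rw [Function.onFun, Finset.disjoint_left]
      intro w hw1 hw2
      simp only [Finset.mem_image] at hw1 hw2
      obtain ⟨v, _, rfl⟩ := hw1
      obtain ⟨v', _, heq⟩ := hw2
      simp only [List.cons.injEq] at heq
      exact hbc heq.2.1.symm
    have hc2 : (S.biUnion (fun a => (S.erase a).biUnion (fun b =>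
        (blockF n ((S.erase a).erase b)).image (fun w => a::b::a::b::w)))).card =
        (n+2) * ((n+1) * (n.factorial * Nat.fib (n+1))) := by
      rw [Finset.card_biUnion, Finset.sum_congr rfl hinner, Finset.sum_const, hS,
        smul_eq_mul]
      intro a ha b hb hab
      rw [Function.onFun, Finset.disjoint_left]
      intro w hw1 hw2
      simp only [Finset.mem_biUnion, Finset.mem_image] at hw1 hw2
      obtain ⟨c, hc, v, _, rfl⟩ := hw1
      obtain ⟨c', hc', v', _, heq⟩ := hw2
      simp only [List.cons.injEq] at heq
      exact hab heq.1.symm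
    rw [Finset.card_union_of_disjoint hd12, hc1, hc2]
    have hfib : Nat.fib (n+3) = Nat.fib (n+1) + Nat.fib (n+2) := by
      rw [Nat.fib_add_two]
    rw [show (n+2+1) = n+3 from rfl, hfib]
    rw [Nat.factorial_succ (n+1), Nat.factorial_succ n]
    ring

lemma avoid_of_good {w : List ℕ} (hg : Good w) {σ : List ℕ} (hlen : σ.length = 4)
    (hends : σ.getD 0 0 = σ.getD 3 0) : Avoids w σ := by
  rintro ⟨t, hsub, hlen', hiso⟩
  rw [hlen] at hlen'
  rcases t with _|⟨t0,_|⟨t1,_|⟨t2,_|⟨t3,_|⟨t4,t⟩⟩⟩⟩⟩ <;> simp at hlen' <;> try omega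
  have h03 := ((hiso 0 3 (by omega) (by omega)).2).2 hends
  simp only [List.getD_cons_zero, List.getD_cons_succ] at h03
  subst h03
  exact hg t0 t1 t2 hsub

lemma good_of_avoids {S : Finset ℕ} {w : List ℕ} (hMP : MP S w)
    (h1 : Avoids w [1,2,2,1]) (h2 : Avoids w [2,1,1,2]) (h3 : Avoids w [1,2,3,1])
    (h4 : Avoids w [1,3,2,1]) (h5 : Avoids w [2,1,3,2]) (h6 : Avoids w [2,3,1,2])
    (h7 : Avoids w [3,1,2,3]) (h8 : Avoids w [3,2,1,3]) : Good w := by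
  intro x y z hsub
  have hcx : w.count x ≤ 2 := by rw [hMP x]; split <;> omega
  have hcnt := hsub.count_le x
  have hyx : y ≠ x := by
    rintro rfl
    simp [List.count_cons] at hcnt
    split at hcnt <;> omega
  have hzx : z ≠ x := by
    rintro rfl
    simp [List.count_cons] at hcnt
    split at hcnt <;> omega
  rcases lt_trichotomy y x with hy | hy | hy
  · rcases lt_trichotomy z x with hz | hz | hz
    · rcases lt_trichotomy y z with hyz | hyz | hyz
      · refine h7 ⟨[x,y,z,x], hsub, rfl, fun i j hi hj => ?_⟩
        simp only [List.length_cons, List.length_nil] at hi hj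
        interval_cases i <;> interval_cases j <;>
          refine ⟨?_, ?_⟩ <;> simp [List.getD_cons_zero, List.getD_cons_succ] <;> omega
      · refine h2 ⟨[x,y,z,x], hsub, rfl, fun i j hi hj => ?_⟩
        simp only [List.length_cons, List.length_nil] at hi hj
        interval_cases i <;> interval_cases j <;>
          refine ⟨?_, ?_⟩ <;> simp [List.getD_cons_zero, List.getD_cons_succ] <;> omega
      · refine h8 ⟨[x,y,z,x], hsub, rfl, fun i j hi hj => ?_⟩
        simp only [List.length_cons, List.length_nil] at hi hj
        interval_cases i <;> interval_cases j <;>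
          refine ⟨?_, ?_⟩ <;> simp [List.getD_cons_zero, List.getD_cons_succ] <;> omega
    · exact hzx hz
    · refine h5 ⟨[x,y,z,x], hsub, rfl, fun i j hi hj => ?_⟩
      simp only [List.length_cons, List.length_nil] at hi hj
      interval_cases i <;> interval_cases j <;>
        refine ⟨?_, ?_⟩ <;> simp [List.getD_cons_zero, List.getD_cons_succ] <;> omega
  · exact hyx hy
  · rcases lt_trichotomy z x with hz | hz | hz
    · refine h6 ⟨[x,y,z,x], hsub, rfl, fun i j hi hj => ?_⟩
      simp only [List.length_cons, List.length_nil] at hi hj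
      interval_cases i <;> interval_cases j <;>
        refine ⟨?_, ?_⟩ <;> simp [List.getD_cons_zero, List.getD_cons_succ] <;> omega
    · exact hzx hz
    · rcases lt_trichotomy y z with hyz | hyz | hyz
      · refine h3 ⟨[x,y,z,x], hsub, rfl, fun i j hi hj => ?_⟩
        simp only [List.length_cons, List.length_nil] at hi hj
        interval_cases i <;> interval_cases j <;>
          refine ⟨?_, ?_⟩ <;> simp [List.getD_cons_zero, List.getD_cons_succ] <;> omega
      · refine h1 ⟨[x,y,z,x], hsub, rfl, fun i j hi hj => ?_⟩
        simp only [List.length_cons, List.length_nil] at hi hj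
        interval_cases i <;> interval_cases j <;>
          refine ⟨?_, ?_⟩ <;> simp [List.getD_cons_zero, List.getD_cons_succ] <;> omega
      · refine h4 ⟨[x,y,z,x], hsub, rfl, fun i j hi hj => ?_⟩
        simp only [List.length_cons, List.length_nil] at hi hj
        interval_cases i <;> interval_cases j <;>
          refine ⟨?_, ?_⟩ <;> simp [List.getD_cons_zero, List.getD_cons_succ] <;> omega

theorem nonnesting_avoid_six_patterns (n : ℕ) (hn : 1 ≤ n) :
    {w : List ℕ | IsNonnesting n w ∧
      Avoids w [1,2,3,1] ∧ Avoids w [1,3,2,1] ∧ Avoids w [2,1,3,2] ∧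
      Avoids w [2,3,1,2] ∧ Avoids w [3,1,2,3] ∧ Avoids w [3,2,1,3]}.ncard =
      Nat.factorial n * Nat.fib (n + 1) := by
  have hcard : (Finset.Icc 1 n).card = n := by rw [Nat.card_Icc]; omega
  have hset : {w : List ℕ | IsNonnesting n w ∧
      Avoids w [1,2,3,1] ∧ Avoids w [1,3,2,1] ∧ Avoids w [2,1,3,2] ∧
      Avoids w [2,3,1,2] ∧ Avoids w [3,1,2,3] ∧ Avoids w [3,2,1,3]} =
      ↑(blockF n (Finset.Icc 1 n)) := by
    ext w
    simp only [Set.mem_setOf_eq, Finset.mem_coe]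
    rw [mem_blockF n _ hcard w]
    constructor
    · rintro ⟨⟨hMP, hA1, hA2⟩, hA3, hA4, hA5, hA6, hA7, hA8⟩
      have hMP' : MP (Finset.Icc 1 n) w := fun i => by
        rw [hMP i]; simp [Finset.mem_Icc]
      exact ⟨hMP', good_of_avoids hMP' hA1 hA2 hA3 hA4 hA5 hA6 hA7 hA8⟩
    · rintro ⟨hMP, hG⟩
      have hMP' : IsMultisetPerm n w := fun i => by
        rw [hMP i]; simp [Finset.mem_Icc]
      exact ⟨⟨hMP', avoid_of_good hG rfl rfl, avoid_of_good hG rfl rfl⟩,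
        avoid_of_good hG rfl rfl, avoid_of_good hG rfl rfl, avoid_of_good hG rfl rfl,
        avoid_of_good hG rfl rfl, avoid_of_good hG rfl rfl, avoid_of_good hG rfl rfl⟩
  rw [hset, Set.ncard_coe_finset, card_blockF n _ hcard]
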